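/- Suppose (A*, B*, C*, D*) is an Mn-dimensional state-space model such that S_l^i · Ȟ*(i+j) · S_m^j is block diagonal for all i, j ≥ 0 (where Ȟ*(0) = D*, Ȟ*(i) = C* A*^{i-1} B* for i ≥ 1), and suppose T^{-1} := Σ_{j=1}^{n} F̌_j S_l^{j-1} C* A*^{j-1} is invertible and Y := Σ_{j=0}^{n-1} T^{-1} A*^{j} B* S_m^{j+1} Ǧ_j is invertible, where F̌_j ∈ R^{Mn×Ml} and Ǧ_j ∈ R^{Mm×Mn} are block diagonal matrices (with repeated blocks F_j ∈ R^{n×l} and G_j ∈ R^{m×n}). Then T^{-1} A* T is a cyclic matrix, T^{-1} B* is a cyclic matrix, C* T is block diagonal, and D* is block diagonal. -/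

import Mathlib

open Matrix

/-- Block cyclic shift matrix: block (i, i+1 mod M) equals I_q, zeros elsewhere. -/
def cycShift (M q : ℕ) [NeZero M] : Matrix (Fin M × Fin q) (Fin M × Fin q) ℝ :=
  fun a b => if b.1 = a.1 + 1 ∧ b.2 = a.2 then 1 else 0

/-- Block diagonal: all off-diagonal p×q blocks vanish. -/
def IsBlockDiag {M p q : ℕ} (K : Matrix (Fin M × Fin p) (Fin M × Fin q) ℝ) : Prop :=
  ∀ i j : Fin M, i ≠ j → ∀ s t, K (i, s) (j, t) = 0

/-- Cyclic: the only possibly nonzero blocks are at positions ((j+1) mod M, j). -/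
def IsCyclicMat {M p q : ℕ} [NeZero M] (K : Matrix (Fin M × Fin p) (Fin M × Fin q) ℝ) : Prop :=
  ∀ i j : Fin M, i ≠ j + 1 → ∀ s t, K (i, s) (j, t) = 0

/-- Cyclic matrix built from blocks `Bs j` placed at positions ((j+1) mod M, j). -/
def cycOf {M p q : ℕ} [NeZero M] (Bs : Fin M → Matrix (Fin p) (Fin q) ℝ) :
    Matrix (Fin M × Fin p) (Fin M × Fin q) ℝ :=
  fun a b => if a.1 = b.1 + 1 then Bs b.1 a.2 b.2 else 0

/-- Block diagonal matrix built from diagonal blocks `Ds j`. -/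
def bdiagOf {M p q : ℕ} (Ds : Fin M → Matrix (Fin p) (Fin q) ℝ) :
    Matrix (Fin M × Fin p) (Fin M × Fin q) ℝ :=
  fun a b => if a.1 = b.1 then Ds b.1 a.2 b.2 else 0

/-- Markov parameters of a state-space model (A*, B*, C*, D*). -/
noncomputable def markovSS {M n m l : ℕ}
    (Astar : Matrix (Fin M × Fin n) (Fin M × Fin n) ℝ)
    (Bstar : Matrix (Fin M × Fin n) (Fin M × Fin m) ℝ)
    (Cstar : Matrix (Fin M × Fin l) (Fin M × Fin n) ℝ)
    (Dstar : Matrix (Fin M × Fin l) (Fin M × Fin m) ℝ) :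
    ℕ → Matrix (Fin M × Fin l) (Fin M × Fin m) ℝ
  | 0 => Dstar
  | (i + 1) => Cstar * Astar ^ i * Bstar

/-- A matrix has "degree `d`" if its only possibly nonzero blocks sit at positions
`(j + d, j)`.  Degree `0` is block diagonal; degree `1` is cyclic. -/
def HasDeg {M : ℕ} [NeZero M] (d : Fin M) {p q : ℕ}
    (K : Matrix (Fin M × Fin p) (Fin M × Fin q) ℝ) : Prop :=
  ∀ i j : Fin M, i ≠ j + d → ∀ s t, K (i, s) (j, t) = 0

lemma hasDeg_of_isBlockDiag {M p q : ℕ} [NeZero M]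
    {K : Matrix (Fin M × Fin p) (Fin M × Fin q) ℝ} (h : IsBlockDiag K) :
    HasDeg (0 : Fin M) K :=
  fun i j hij s t => h i j (by simpa using hij) s t

lemma isBlockDiag_of_hasDeg {M p q : ℕ} [NeZero M]
    {K : Matrix (Fin M × Fin p) (Fin M × Fin q) ℝ} (h : HasDeg (0 : Fin M) K) :
    IsBlockDiag K :=
  fun i j hij s t => h i j (by simpa using hij) s t

lemma hasDeg_mul {M : ℕ} [NeZero M] {d e : Fin M} {p q r : ℕ}
    {K : Matrix (Fin M × Fin p) (Fin M × Fin q) ℝ}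
    {L : Matrix (Fin M × Fin q) (Fin M × Fin r) ℝ}
    (hK : HasDeg d K) (hL : HasDeg e L) : HasDeg (e + d) (K * L) := by
  intro i j hij s t
  rw [Matrix.mul_apply]
  apply Finset.sum_eq_zero
  rintro ⟨k, u⟩ -
  by_cases h : i = k + d
  · have hk : k ≠ j + e := by
      rintro rfl
      exact hij (by rw [h, add_assoc])
    rw [hL k j hk u t, mul_zero]
  · rw [hK i k h s u, zero_mul]

lemma hasDeg_sum {M : ℕ} [NeZero M] {d : Fin M} {p q : ℕ} {ι : Type*} (s : Finset ι)
    (f : ι → Matrix (Fin M × Fin p) (Fin M × Fin q) ℝ)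
    (h : ∀ i ∈ s, HasDeg d (f i)) : HasDeg d (∑ i ∈ s, f i) := by
  intro i j hij u t
  rw [Matrix.sum_apply]
  exact Finset.sum_eq_zero fun k hk => h k hk i j hij u t

lemma hasDeg_bdiag {M p q : ℕ} [NeZero M] (Ds : Fin M → Matrix (Fin p) (Fin q) ℝ) :
    HasDeg (0 : Fin M) (bdiagOf Ds) := by
  intro i j hij s t
  simp only [bdiagOf]
  rw [if_neg (by simpa using hij)]

lemma hasDeg_shiftT {M q : ℕ} [NeZero M] : HasDeg (1 : Fin M) (cycShift M q)ᵀ := by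
  intro i j hij s t
  simp only [cycShift, Matrix.transpose_apply]
  rw [if_neg]
  rintro ⟨h1, -⟩
  exact hij h1

lemma shift_mul_shiftT {M q : ℕ} [NeZero M] :
    cycShift M q * (cycShift M q)ᵀ = 1 := by
  ext a b
  rw [Matrix.mul_apply, Matrix.one_apply]
  simp only [cycShift, Matrix.transpose_apply]
  rw [Finset.sum_eq_single ((a.1 + 1, a.2) : Fin M × Fin q)]
  · by_cases hab : a = b
    · subst hab; simp
    · rw [if_neg hab, if_pos ⟨rfl, rfl⟩, one_mul, if_neg]
      rintro ⟨h1, h2⟩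
      exact hab (Prod.ext (add_right_cancel h1) h2)
  · rintro ⟨c1, c2⟩ - hc
    rw [if_neg, zero_mul]
    rintro ⟨h1, h2⟩
    exact hc (Prod.ext h1 h2)
  · intro h
    exact absurd (Finset.mem_univ _) h

lemma inv_hasDeg_zero {M p : ℕ} [NeZero M] {Y : Matrix (Fin M × Fin p) (Fin M × Fin p) ℝ}
    (hY : IsUnit Y) (h : HasDeg (0 : Fin M) Y) : HasDeg (0 : Fin M) Y⁻¹ := by
  have hdet : IsUnit Y.det := (Matrix.isUnit_iff_isUnit_det Y).mp hY
  have hYinv : Y⁻¹ * Y = 1 := Matrix.nonsing_inv_mul Y hdet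
  set P : Matrix (Fin M × Fin p) (Fin M × Fin p) ℝ :=
    fun a b => if a.1 = b.1 then Y⁻¹ a b else 0 with hPdef
  have hPY : P * Y = 1 := by
    ext a b
    rw [Matrix.mul_apply]
    by_cases hab : a.1 = b.1
    · have key : ∀ c : Fin M × Fin p, P a c * Y c b = Y⁻¹ a c * Y c b := by
        intro c
        by_cases hac : a.1 = c.1
        · simp [hPdef, hac]
        · have hycb : Y c b = 0 := h c.1 b.1 (by
            simp only [add_zero]
            intro hcb; exact hac (hab.trans hcb.symm)) c.2 b.2
          simp [hPdef, hac, hycb]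
      rw [Finset.sum_congr rfl (fun c _ => key c), ← Matrix.mul_apply, hYinv]
    · have key0 : ∀ c : Fin M × Fin p, P a c * Y c b = 0 := by
        intro c
        by_cases hac : a.1 = c.1
        · have hycb : Y c b = 0 := h c.1 b.1 (by
            simp only [add_zero]
            intro hcb; exact hab (hac.trans hcb)) c.2 b.2
          rw [hycb, mul_zero]
        · simp [hPdef, hac]
      rw [Finset.sum_eq_zero fun c _ => key0 c,
        Matrix.one_apply_ne (fun he => hab (by rw [he]))]
  intro i j hij s t
  rw [Matrix.inv_eq_left_inv hPY]
  simp only [hPdef]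
  rw [if_neg (by simpa using hij)]

theorem stmt14 (M n m l : ℕ) [NeZero M]
    (Astar : Matrix (Fin M × Fin n) (Fin M × Fin n) ℝ)
    (Bstar : Matrix (Fin M × Fin n) (Fin M × Fin m) ℝ)
    (Cstar : Matrix (Fin M × Fin l) (Fin M × Fin n) ℝ)
    (Dstar : Matrix (Fin M × Fin l) (Fin M × Fin m) ℝ)
    (Fs : Fin n → Matrix (Fin n) (Fin l) ℝ)
    (Gs : Fin n → Matrix (Fin m) (Fin n) ℝ)
    (hH : ∀ i j : ℕ, IsBlockDiag
      ((cycShift M l) ^ i * markovSS Astar Bstar Cstar Dstar (i + j) * (cycShift M m) ^ j))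
    (Tinv : Matrix (Fin M × Fin n) (Fin M × Fin n) ℝ)
    (hTdef : Tinv = ∑ j : Fin n,
      bdiagOf (fun _ : Fin M => Fs j) * (cycShift M l) ^ (j : ℕ) * Cstar * Astar ^ (j : ℕ))
    (hT : IsUnit Tinv)
    (Y : Matrix (Fin M × Fin n) (Fin M × Fin n) ℝ)
    (hYdef : Y = ∑ j : Fin n,
      Tinv * Astar ^ (j : ℕ) * Bstar * (cycShift M m) ^ ((j : ℕ) + 1) * bdiagOf (fun _ => Gs j))
    (hY : IsUnit Y) :
    IsCyclicMat (Tinv * Astar * Tinv⁻¹) ∧ IsCyclicMat (Tinv * Bstar) ∧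
    IsBlockDiag (Cstar * Tinv⁻¹) ∧ IsBlockDiag Dstar := by
  replace hYdef : Y = ∑ j : Fin n, Tinv * Astar ^ (j : ℕ) * Bstar * (cycShift M m) ^ ((j : ℕ) + 1)
      * (bdiagOf (fun _ => Gs j) : Matrix (Fin M × Fin m) (Fin M × Fin n) ℝ) := hYdef
  have hdetT : IsUnit Tinv.det := (Matrix.isUnit_iff_isUnit_det _).mp hT
  have hdetY : IsUnit Y.det := (Matrix.isUnit_iff_isUnit_det _).mp hY
  -- the block-diagonal "observer products"
  have hW : ∀ k : ℕ, HasDeg (0 : Fin M)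
      (Tinv * Astar ^ k * Bstar * (cycShift M m) ^ (k + 1)) := by
    intro k
    rw [hTdef, Matrix.sum_mul, Matrix.sum_mul, Matrix.sum_mul]
    refine hasDeg_sum _ _ fun p _ => ?_
    have h1 : HasDeg (0 : Fin M)
        ((cycShift M l) ^ (p : ℕ) * (Cstar * Astar ^ ((p : ℕ) + k) * Bstar)
          * (cycShift M m) ^ (k + 1)) := by
      have h0 := hasDeg_of_isBlockDiag (hH (p : ℕ) (k + 1))
      have e : (p : ℕ) + (k + 1) = ((p : ℕ) + k) + 1 := by omega
      rw [e] at h0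
      simpa [markovSS] using h0
    have e2 : (bdiagOf (fun _ => Fs p) : Matrix (Fin M × Fin n) (Fin M × Fin l) ℝ) * (cycShift M l) ^ (p : ℕ) * Cstar * Astar ^ (p : ℕ)
          * Astar ^ k * Bstar * (cycShift M m) ^ (k + 1)
        = (bdiagOf (fun _ => Fs p) : Matrix (Fin M × Fin n) (Fin M × Fin l) ℝ) * ((cycShift M l) ^ (p : ℕ)
          * (Cstar * Astar ^ ((p : ℕ) + k) * Bstar) * (cycShift M m) ^ (k + 1)) := by
      simp only [pow_add, Matrix.mul_assoc]
    rw [e2]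
    simpa using hasDeg_mul (hasDeg_bdiag _) h1
  have hYBD : HasDeg (0 : Fin M) Y := by
    rw [hYdef]
    refine hasDeg_sum _ _ fun j _ => ?_
    simpa using hasDeg_mul (hW (j : ℕ)) (hasDeg_bdiag _)
  have hYinvBD : HasDeg (0 : Fin M) Y⁻¹ := inv_hasDeg_zero hY hYBD
  have cancelT : ∀ X : Matrix (Fin M × Fin n) (Fin M × Fin n) ℝ,
      Tinv⁻¹ * (Tinv * X) = X := fun X => Matrix.nonsing_inv_mul_cancel_left _ _ hdetT
  refine ⟨?_, ?_, ?_, ?_⟩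
  · -- T⁻¹ A T is cyclic
    have keyA : (Tinv * Astar * Tinv⁻¹) * Y
        = ∑ j : Fin n, (Tinv * Astar ^ ((j : ℕ) + 1) * Bstar
            * (cycShift M m) ^ (((j : ℕ) + 1) + 1)) * (cycShift M m)ᵀ
            * (bdiagOf (fun _ => Gs j) : Matrix (Fin M × Fin m) (Fin M × Fin n) ℝ) := by
      rw [hYdef, Matrix.mul_sum]
      refine Finset.sum_congr rfl fun j _ => ?_
      have hsm : (cycShift M m) ^ (((j : ℕ) + 1) + 1)
            * ((cycShift M m)ᵀ * (bdiagOf (fun _ => Gs j) : Matrix (Fin M × Fin m) (Fin M × Fin n) ℝ))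
          = (cycShift M m) ^ ((j : ℕ) + 1) * (bdiagOf (fun _ => Gs j) : Matrix (Fin M × Fin m) (Fin M × Fin n) ℝ) := by
        rw [← Matrix.mul_assoc, pow_succ,
          Matrix.mul_assoc ((cycShift M m) ^ ((j : ℕ) + 1)) (cycShift M m) ((cycShift M m)ᵀ),
          shift_mul_shiftT,
          Matrix.mul_one]
      simp only [Matrix.mul_assoc]
      rw [cancelT, hsm, pow_succ' Astar (j : ℕ)]
      simp only [Matrix.mul_assoc]
    have heq : Tinv * Astar * Tinv⁻¹
        = (∑ j : Fin n, (Tinv * Astar ^ ((j : ℕ) + 1) * Bstar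
            * (cycShift M m) ^ (((j : ℕ) + 1) + 1)) * (cycShift M m)ᵀ
            * (bdiagOf (fun _ => Gs j) : Matrix (Fin M × Fin m) (Fin M × Fin n) ℝ)) * Y⁻¹ := by
      rw [← keyA, Matrix.mul_nonsing_inv_cancel_right _ _ hdetY]
    rw [heq]
    have hdeg : HasDeg (1 : Fin M) ((∑ j : Fin n, (Tinv * Astar ^ ((j : ℕ) + 1) * Bstar
            * (cycShift M m) ^ (((j : ℕ) + 1) + 1)) * (cycShift M m)ᵀ
            * (bdiagOf (fun _ => Gs j) : Matrix (Fin M × Fin m) (Fin M × Fin n) ℝ)) * Y⁻¹) := by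
      have hsum : HasDeg (1 : Fin M) (∑ j : Fin n, (Tinv * Astar ^ ((j : ℕ) + 1) * Bstar
            * (cycShift M m) ^ (((j : ℕ) + 1) + 1)) * (cycShift M m)ᵀ
            * (bdiagOf (fun _ => Gs j) : Matrix (Fin M × Fin m) (Fin M × Fin n) ℝ)) := by
        refine hasDeg_sum _ _ fun j _ => ?_
        simpa using hasDeg_mul (hasDeg_mul (hW ((j : ℕ) + 1)) hasDeg_shiftT)
          (hasDeg_bdiag _)
      simpa using hasDeg_mul hsum hYinvBD
    exact hdeg
  · -- T⁻¹ B is cyclic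
    have keyB : Tinv * Bstar
        = (Tinv * Astar ^ 0 * Bstar * (cycShift M m) ^ (0 + 1)) * (cycShift M m)ᵀ := by
      simp only [pow_zero, Matrix.mul_one, Nat.zero_add, pow_one]
      rw [Matrix.mul_assoc (Tinv * Bstar), shift_mul_shiftT, Matrix.mul_one]
    rw [keyB]
    have hdeg : HasDeg (1 : Fin M)
        ((Tinv * Astar ^ 0 * Bstar * (cycShift M m) ^ (0 + 1)) * (cycShift M m)ᵀ) := by
      simpa using hasDeg_mul (hW 0) hasDeg_shiftT
    exact hdeg
  · -- C T is block diagonal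
    have keyC : (Cstar * Tinv⁻¹) * Y
        = ∑ j : Fin n, (Cstar * Astar ^ (j : ℕ) * Bstar * (cycShift M m) ^ ((j : ℕ) + 1))
            * (bdiagOf (fun _ => Gs j) : Matrix (Fin M × Fin m) (Fin M × Fin n) ℝ) := by
      rw [hYdef, Matrix.mul_sum]
      refine Finset.sum_congr rfl fun j _ => ?_
      simp only [Matrix.mul_assoc]
      rw [cancelT]
    have heq : Cstar * Tinv⁻¹
        = (∑ j : Fin n, (Cstar * Astar ^ (j : ℕ) * Bstar * (cycShift M m) ^ ((j : ℕ) + 1))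
            * (bdiagOf (fun _ => Gs j) : Matrix (Fin M × Fin m) (Fin M × Fin n) ℝ)) * Y⁻¹ := by
      rw [← keyC, Matrix.mul_nonsing_inv_cancel_right _ _ hdetY]
    rw [heq]
    refine isBlockDiag_of_hasDeg ?_
    have hsum : HasDeg (0 : Fin M) (∑ j : Fin n,
        (Cstar * Astar ^ (j : ℕ) * Bstar * (cycShift M m) ^ ((j : ℕ) + 1))
          * (bdiagOf (fun _ => Gs j) : Matrix (Fin M × Fin m) (Fin M × Fin n) ℝ)) := by
      refine hasDeg_sum _ _ fun j _ => ?_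
      have h1 : HasDeg (0 : Fin M)
          (Cstar * Astar ^ (j : ℕ) * Bstar * (cycShift M m) ^ ((j : ℕ) + 1)) := by
        have h0 := hasDeg_of_isBlockDiag (hH 0 ((j : ℕ) + 1))
        simpa [markovSS, Matrix.mul_assoc] using h0
      simpa using hasDeg_mul h1 (hasDeg_bdiag _)
    simpa using hasDeg_mul hsum hYinvBD
  · -- D is block diagonal
    have h0 := hH 0 0
    simpa [markovSS] using h0
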